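/- Let P be a polyomino. The set M of inner 2-minors of P forms a reduced Gröbner basis of I_P with respect to <^i_grevlex for every i ∈ O = {1,3,5,7} if and only if for any two inner intervals [a,b] and [b,e] of P, at least one of the intervals [a,f] and [a,g] is an inner interval of P, where f and g are the anti-diagonal corners of [b,e]. -/

import Mathlib

namespace PolyominoPaper

open MvPolynomial

/-- A point of `ℕ²`.  A cell is identified with its lower left corner. -/
abbrev Pt : Type := ℕ × ℕ

/-- The four vertices of the unit cell with lower left corner `c`. -/
def cellVerts (c : Pt) : Finset Pt :=
  {c, (c.1 + 1, c.2), (c.1, c.2 + 1), (c.1 + 1, c.2 + 1)}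

/-- The vertex set `V(P)` of a finite collection of cells `P`. -/
def vertexSet (P : Finset Pt) : Finset Pt := P.biUnion cellVerts

/-- Two cells share an edge. -/
def CellAdj (c d : Pt) : Prop :=
  (c.1 = d.1 ∧ (c.2 + 1 = d.2 ∨ d.2 + 1 = c.2)) ∨
  (c.2 = d.2 ∧ (c.1 + 1 = d.1 ∨ d.1 + 1 = c.1))

/-- A polyomino: a nonempty finite collection of cells, any two of which are
connected through a sequence of edge-adjacent cells of `P`. -/
def IsPolyomino (P : Finset Pt) : Prop :=
  P.Nonempty ∧ ∀ c ∈ P, ∀ d ∈ P,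
    Relation.ReflTransGen (fun x y => y ∈ P ∧ CellAdj x y) c d

/-- `[a,b]` is an inner interval of `P`: it is a proper interval and all its
cells belong to `P` (cells are given by their lower left corners `e`). -/
def IsInnerInterval (P : Finset Pt) (a b : Pt) : Prop :=
  a.1 < b.1 ∧ a.2 < b.2 ∧
    ∀ e : Pt, a.1 ≤ e.1 → e.1 < b.1 → a.2 ≤ e.2 → e.2 < b.2 → e ∈ P

/-- A collection of cells is thin if it does not contain the four cells of a
`2 × 2` square. -/
def IsThin (P : Finset Pt) : Prop :=
  ¬ ∃ w : Pt, w ∈ P ∧ (w.1 + 1, w.2) ∈ P ∧ (w.1, w.2 + 1) ∈ P ∧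
      (w.1 + 1, w.2 + 1) ∈ P

/-- A maximal inner interval of `P`: an inner interval not properly contained
in another inner interval of `P`. -/
def IsMaxInnerInterval (P : Finset Pt) (a b : Pt) : Prop :=
  IsInnerInterval P a b ∧
    ∀ a' b' : Pt, IsInnerInterval P a' b' →
      a'.1 ≤ a.1 → a'.2 ≤ a.2 → b.1 ≤ b'.1 → b.2 ≤ b'.2 → a = a' ∧ b = b'

/-- The inner 2-minor `x_a x_b - x_c x_d` attached to the interval `[a,b]`,
where `c, d` are the anti-diagonal corners of `[a,b]`. -/
noncomputable def innerMinor (K : Type*) [Field K] (a b : Pt) :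
    MvPolynomial Pt K :=
  X a * X b - X (a.1, b.2) * X (b.1, a.2)

/-- The set `M` of inner 2-minors of `P`. -/
def innerMinors (K : Type*) [Field K] (P : Finset Pt) :
    Set (MvPolynomial Pt K) :=
  {f | ∃ a b : Pt, IsInnerInterval P a b ∧ f = innerMinor K a b}

/-- The polyomino ideal `I_P`, generated by the inner 2-minors of `P`. -/
noncomputable def polyIdeal (K : Type*) [Field K] (P : Finset Pt) :
    Ideal (MvPolynomial Pt K) :=
  Ideal.span (innerMinors K P)

/-- Total degree of a monomial (exponent vector). -/
def mdeg (m : Pt →₀ ℕ) : ℕ := m.sum fun _ e => e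

/-- The graded reverse lexicographic (strict) order on monomials induced by a
total order `vlt` on the variables (`vlt a b` meaning `a` is smaller than `b`):
`m₁ < m₂` iff `deg m₁ < deg m₂`, or the degrees agree and the smallest
variable in which they differ has a larger exponent in `m₁`. -/
def GrevlexLt (vlt : Pt → Pt → Prop) (m₁ m₂ : Pt →₀ ℕ) : Prop :=
  mdeg m₁ < mdeg m₂ ∨
    (mdeg m₁ = mdeg m₂ ∧ ∃ v : Pt, m₂ v < m₁ v ∧ ∀ w : Pt, vlt w v → m₁ w = m₂ w)

/-- `m` is the leading monomial of `f` with respect to the strict monomial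
order `mlt`. -/
def IsLeadMon {K : Type*} [Field K] (mlt : (Pt →₀ ℕ) → (Pt →₀ ℕ) → Prop)
    (f : MvPolynomial Pt K) (m : Pt →₀ ℕ) : Prop :=
  m ∈ f.support ∧ ∀ m' ∈ f.support, m' ≠ m → mlt m' m

/-- The ideal generated by the leading monomials of the members of `F`. -/
noncomputable def lmIdeal {K : Type*} [Field K]
    (mlt : (Pt →₀ ℕ) → (Pt →₀ ℕ) → Prop) (F : Set (MvPolynomial Pt K)) :
    Ideal (MvPolynomial Pt K) :=
  Ideal.span {p | ∃ f ∈ F, ∃ m : Pt →₀ ℕ, IsLeadMon mlt f m ∧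
    p = monomial m (1 : K)}

/-- `G` is a Gröbner basis of `I` with respect to the monomial order `mlt`. -/
def IsGroebnerBasis {K : Type*} [Field K]
    (mlt : (Pt →₀ ℕ) → (Pt →₀ ℕ) → Prop) (G : Set (MvPolynomial Pt K))
    (I : Ideal (MvPolynomial Pt K)) : Prop :=
  (∀ g ∈ G, g ∈ I) ∧ lmIdeal mlt G = lmIdeal mlt (I : Set (MvPolynomial Pt K))

/-- `G` is a reduced Gröbner basis of `I` with respect to `mlt`: it is a
Gröbner basis, every element is monic, and no monomial occurring in an element
of `G` is divisible by the leading monomial of a different element of `G`. -/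
def IsReducedGroebnerBasis {K : Type*} [Field K]
    (mlt : (Pt →₀ ℕ) → (Pt →₀ ℕ) → Prop) (G : Set (MvPolynomial Pt K))
    (I : Ideal (MvPolynomial Pt K)) : Prop :=
  IsGroebnerBasis mlt G I ∧
    (∀ g ∈ G, ∀ m : Pt →₀ ℕ, IsLeadMon mlt g m → MvPolynomial.coeff m g = 1) ∧
    (∀ g ∈ G, ∀ g' ∈ G, g' ≠ g → ∀ m ∈ g.support, ∀ m' : Pt →₀ ℕ,
      IsLeadMon mlt g' m' → ¬ m' ≤ m)

/-- The eight total orders `<^1, …, <^8` on the vertices, as in Table 1 of the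
paper; e.g. `a <^1 b` iff `a₁ < b₁` or (`a₁ = b₁` and `a₂ > b₂`), and
`a <^5 b` iff `a₂ < b₂` or (`a₂ = b₂` and `a₁ > b₁`). -/
def vord : ℕ → Pt → Pt → Prop
  | 1 => fun a b => a.1 < b.1 ∨ (a.1 = b.1 ∧ b.2 < a.2)
  | 2 => fun a b => b.1 < a.1 ∨ (a.1 = b.1 ∧ b.2 < a.2)
  | 3 => fun a b => b.1 < a.1 ∨ (a.1 = b.1 ∧ a.2 < b.2)
  | 4 => fun a b => a.1 < b.1 ∨ (a.1 = b.1 ∧ a.2 < b.2)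
  | 5 => fun a b => a.2 < b.2 ∨ (a.2 = b.2 ∧ b.1 < a.1)
  | 6 => fun a b => a.2 < b.2 ∨ (a.2 = b.2 ∧ a.1 < b.1)
  | 7 => fun a b => b.2 < a.2 ∨ (a.2 = b.2 ∧ a.1 < b.1)
  | 8 => fun a b => b.2 < a.2 ∨ (a.2 = b.2 ∧ b.1 < a.1)
  | _ => fun _ _ => False

/-- The cyclic shift of a total order `vlt` making `v` the smallest element:
first come `v` and the elements above `v`, in the old order, then the elements
below `v`, in the old order. -/
def vordShift (vlt : Pt → Pt → Prop) (v : Pt) : Pt → Pt → Prop :=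
  fun a b => (¬ vlt a v ∧ vlt b v) ∨ ((vlt a v ↔ vlt b v) ∧ vlt a b)

/-- The condition `π_k` (for `k = 1, …, 8`) at a vertex `v` of `P`, i.e. one of
the two forbidden configurations (I), (II) of Table 2 of the paper occurs at
`v`; `π₁` is as in Definition 2.2, and `π_k` is obtained from `π₁` by the
symmetry of the plane carrying the order `<^1` to `<^k`. -/
def SatisfiesPi (P : Finset Pt) (k : ℕ) (v : Pt) : Prop :=
  ∃ x₁ x₂ x₃ y₁ y₂ y₃ : ℕ, x₁ < x₂ ∧ x₂ < x₃ ∧ y₁ < y₂ ∧ y₂ < y₃ ∧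
    (match k with
      | 1 =>
        (v = (x₁, y₂) ∧
          IsInnerInterval P (x₁, y₁) (x₂, y₂) ∧
          IsInnerInterval P (x₂, y₂) (x₃, y₃) ∧
          IsInnerInterval P (x₁, y₂) (x₃, y₃) ∧
          ¬ IsInnerInterval P (x₁, y₁) (x₃, y₂)) ∨
        (v = (x₂, y₂) ∧
          IsInnerInterval P (x₁, y₂) (x₂, y₃) ∧
          IsInnerInterval P (x₂, y₁) (x₃, y₂) ∧
          IsInnerInterval P (x₂, y₂) (x₃, y₃) ∧
          ¬ IsInnerInterval P (x₁, y₁) (x₂, y₂))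
      | 2 =>
        (v = (x₃, y₂) ∧
          IsInnerInterval P (x₂, y₁) (x₃, y₂) ∧
          IsInnerInterval P (x₁, y₂) (x₂, y₃) ∧
          IsInnerInterval P (x₁, y₂) (x₃, y₃) ∧
          ¬ IsInnerInterval P (x₁, y₁) (x₃, y₂)) ∨
        (v = (x₂, y₂) ∧
          IsInnerInterval P (x₂, y₂) (x₃, y₃) ∧
          IsInnerInterval P (x₁, y₁) (x₂, y₂) ∧
          IsInnerInterval P (x₁, y₂) (x₂, y₃) ∧
          ¬ IsInnerInterval P (x₂, y₁) (x₃, y₂))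
      | 3 =>
        (v = (x₃, y₂) ∧
          IsInnerInterval P (x₂, y₂) (x₃, y₃) ∧
          IsInnerInterval P (x₁, y₁) (x₂, y₂) ∧
          IsInnerInterval P (x₁, y₁) (x₃, y₂) ∧
          ¬ IsInnerInterval P (x₁, y₂) (x₃, y₃)) ∨
        (v = (x₂, y₂) ∧
          IsInnerInterval P (x₂, y₁) (x₃, y₂) ∧
          IsInnerInterval P (x₁, y₂) (x₂, y₃) ∧
          IsInnerInterval P (x₁, y₁) (x₂, y₂) ∧
          ¬ IsInnerInterval P (x₂, y₂) (x₃, y₃))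
      | 4 =>
        (v = (x₁, y₂) ∧
          IsInnerInterval P (x₁, y₂) (x₂, y₃) ∧
          IsInnerInterval P (x₂, y₁) (x₃, y₂) ∧
          IsInnerInterval P (x₁, y₁) (x₃, y₂) ∧
          ¬ IsInnerInterval P (x₁, y₂) (x₃, y₃)) ∨
        (v = (x₂, y₂) ∧
          IsInnerInterval P (x₁, y₁) (x₂, y₂) ∧
          IsInnerInterval P (x₂, y₂) (x₃, y₃) ∧
          IsInnerInterval P (x₂, y₁) (x₃, y₂) ∧
          ¬ IsInnerInterval P (x₁, y₂) (x₂, y₃))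
      | 5 =>
        (v = (x₂, y₁) ∧
          IsInnerInterval P (x₁, y₁) (x₂, y₂) ∧
          IsInnerInterval P (x₂, y₂) (x₃, y₃) ∧
          IsInnerInterval P (x₂, y₁) (x₃, y₃) ∧
          ¬ IsInnerInterval P (x₁, y₁) (x₂, y₃)) ∨
        (v = (x₂, y₂) ∧
          IsInnerInterval P (x₂, y₁) (x₃, y₂) ∧
          IsInnerInterval P (x₁, y₂) (x₂, y₃) ∧
          IsInnerInterval P (x₂, y₂) (x₃, y₃) ∧
          ¬ IsInnerInterval P (x₁, y₁) (x₂, y₂))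
      | 6 =>
        (v = (x₂, y₃) ∧
          IsInnerInterval P (x₁, y₂) (x₂, y₃) ∧
          IsInnerInterval P (x₂, y₁) (x₃, y₂) ∧
          IsInnerInterval P (x₂, y₁) (x₃, y₃) ∧
          ¬ IsInnerInterval P (x₁, y₁) (x₂, y₃)) ∨
        (v = (x₂, y₂) ∧
          IsInnerInterval P (x₂, y₂) (x₃, y₃) ∧
          IsInnerInterval P (x₁, y₁) (x₂, y₂) ∧
          IsInnerInterval P (x₂, y₁) (x₃, y₂) ∧
          ¬ IsInnerInterval P (x₁, y₂) (x₂, y₃))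
      | 7 =>
        (v = (x₂, y₃) ∧
          IsInnerInterval P (x₂, y₂) (x₃, y₃) ∧
          IsInnerInterval P (x₁, y₁) (x₂, y₂) ∧
          IsInnerInterval P (x₁, y₁) (x₂, y₃) ∧
          ¬ IsInnerInterval P (x₂, y₁) (x₃, y₃)) ∨
        (v = (x₂, y₂) ∧
          IsInnerInterval P (x₁, y₂) (x₂, y₃) ∧
          IsInnerInterval P (x₂, y₁) (x₃, y₂) ∧
          IsInnerInterval P (x₁, y₁) (x₂, y₂) ∧
          ¬ IsInnerInterval P (x₂, y₂) (x₃, y₃))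
      | 8 =>
        (v = (x₂, y₁) ∧
          IsInnerInterval P (x₂, y₁) (x₃, y₂) ∧
          IsInnerInterval P (x₁, y₂) (x₂, y₃) ∧
          IsInnerInterval P (x₁, y₁) (x₂, y₃) ∧
          ¬ IsInnerInterval P (x₂, y₁) (x₃, y₃)) ∨
        (v = (x₂, y₂) ∧
          IsInnerInterval P (x₁, y₁) (x₂, y₂) ∧
          IsInnerInterval P (x₂, y₂) (x₃, y₃) ∧
          IsInnerInterval P (x₁, y₂) (x₂, y₃) ∧
          ¬ IsInnerInterval P (x₂, y₁) (x₃, y₂))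
      | _ => False)

/-- The vector `c_C ∈ ℤ^{V}` attached to the cell with lower left corner `c`. -/
noncomputable def cellVec (c : Pt) : Pt →₀ ℤ :=
  Finsupp.single c 1 + Finsupp.single (c.1 + 1, c.2 + 1) 1
    - Finsupp.single (c.1 + 1, c.2) 1 - Finsupp.single (c.1, c.2 + 1) 1

/-- The lattice `Λ` generated by the vectors attached to the cells of `P`. -/
noncomputable def latticeOf (P : Finset Pt) : AddSubgroup (Pt →₀ ℤ) :=
  AddSubgroup.closure (cellVec '' ↑P)

/-- Positive part of an integer vector, kept with integer values. -/
noncomputable def intPosPart (u : Pt →₀ ℤ) : Pt →₀ ℤ :=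
  Finsupp.mapRange (fun z => max z 0) (by simp) u

/-- Positive part `u⁺` of an integer vector, as an exponent vector. -/
noncomputable def natPosPart (u : Pt →₀ ℤ) : Pt →₀ ℕ :=
  Finsupp.mapRange Int.toNat Int.toNat_zero u

/-- Negative part `u⁻` of an integer vector, as an exponent vector. -/
noncomputable def natNegPart (u : Pt →₀ ℤ) : Pt →₀ ℕ := natPosPart (-u)

/-- The binomial `x^{u⁺} - x^{u⁻}` attached to an integer vector `u`. -/
noncomputable def latticeBinomial (K : Type*) [Field K] (u : Pt →₀ ℤ) :
    MvPolynomial Pt K :=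
  monomial (natPosPart u) 1 - monomial (natNegPart u) 1

/-- The lattice ideal `I_Λ` of the lattice attached to `P`. -/
noncomputable def latticeIdeal (K : Type*) [Field K] (P : Finset Pt) :
    Ideal (MvPolynomial Pt K) :=
  Ideal.span {f | ∃ u ∈ latticeOf P, f = latticeBinomial K u}

/-- A thin cycle: a thin polyomino whose cells can be arranged in a cyclic
path `C₁, …, Cₙ` of pairwise distinct edge-adjacent cells (with `C₁` and `Cₙ`
sharing an edge), cells at cyclic distance at least `3` being disjoint. -/
def IsThinCycle (P : Finset Pt) : Prop :=
  IsPolyomino P ∧ IsThin P ∧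
    ∃ n : ℕ, 0 < n ∧ ∃ c : ZMod n → Pt,
      Function.Injective c ∧ (∀ i, c i ∈ P) ∧ (∀ p ∈ P, ∃ i, c i = p) ∧
      (∀ i, CellAdj (c i) (c (i + 1))) ∧
      (∀ i j : ZMod n, j ≠ i → j ≠ i + 1 → j ≠ i + 2 → j ≠ i - 1 → j ≠ i - 2 →
        cellVerts (c i) ∩ cellVerts (c j) = ∅)

/-- A grid polyomino (Definition 4.8 of the paper). -/
def IsGridPolyomino (P : Finset Pt) : Prop :=
  IsPolyomino P ∧
    ∃ (m n r s : ℕ) (a b : ℕ → ℕ → Pt),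
      (∀ i ∈ Finset.Icc 1 r, ∀ j ∈ Finset.Icc 1 s,
        1 < (a i j).1 ∧ (a i j).1 < (b i j).1 ∧ (b i j).1 < m ∧
        1 < (a i j).2 ∧ (a i j).2 < (b i j).2 ∧ (b i j).2 < n) ∧
      (∀ i ∈ Finset.Icc 1 r, ∀ l ∈ Finset.Icc 1 s, ∀ k ∈ Finset.Icc 1 s,
        (a i l).1 = (a i k).1 ∧ (b i l).1 = (b i k).1) ∧
      (∀ j ∈ Finset.Icc 1 s, ∀ l ∈ Finset.Icc 1 r, ∀ k ∈ Finset.Icc 1 r,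
        (a l j).2 = (a k j).2 ∧ (b l j).2 = (b k j).2) ∧
      (∀ i ∈ Finset.Icc 1 (r - 1), ∀ j ∈ Finset.Icc 1 (s - 1),
        (a (i + 1) j).1 = (b i j).1 + 1 ∧ (a i (j + 1)).2 = (b i j).2 + 1) ∧
      P = Finset.Icc ((1, 1) : Pt) (m - 1, n - 1) \
            ((Finset.Icc 1 r ×ˢ Finset.Icc 1 s).biUnion fun ij =>
              Finset.Icc (a ij.1 ij.2)
                ((b ij.1 ij.2).1 - 1, (b ij.1 ij.2).2 - 1))

/-- The cell with lower left corner `c` is properly contained in the interval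
`[a, b]`. -/
def CellProperlyInInterval (a b c : Pt) : Prop :=
  a.1 ≤ c.1 ∧ a.2 ≤ c.2 ∧ c.1 + 1 ≤ b.1 ∧ c.2 + 1 ≤ b.2 ∧
    ¬(a = c ∧ b = (c.1 + 1, c.2 + 1))

/-- The cell `c` is properly contained in exactly one maximal inner interval
of `P` (membership in the set `P₁` of Definition 4.10). -/
def InExactlyOneMaxInterval (P : Finset Pt) (c : Pt) : Prop :=
  ∃! ab : Pt × Pt, IsMaxInnerInterval P ab.1 ab.2 ∧
    CellProperlyInInterval ab.1 ab.2 c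

/-- `P'` is a subgrid polyomino of the grid polyomino `P`: it is a polyomino
obtained from `P` by deleting cells each of which is properly contained in
exactly one maximal inner interval of `P`. -/
def IsSubgridOf (P' P : Finset Pt) : Prop :=
  IsGridPolyomino P ∧ P' ⊆ P ∧
    (∀ c ∈ P, c ∉ P' → InExactlyOneMaxInterval P c) ∧ IsPolyomino P'


/-! ### Auxiliary development for Proposition 2.1 -/

section Aux

open Finsupp

/-- `i` is an odd order index. -/
def Oi (i : ℕ) : Prop := i = 1 ∨ i = 3 ∨ i = 5 ∨ i = 7

lemma prod_ne_iff {x y : Pt} : x ≠ y ↔ (x.1 ≠ y.1 ∨ x.2 ≠ y.2) := by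
  constructor
  · intro h; by_contra hc; push_neg at hc; exact h (Prod.ext hc.1 hc.2)
  · rintro (h | h) he <;> subst he <;> simp at h

lemma vord_trans {i : ℕ} (h : Oi i) : Transitive (vord i) := by
  rcases h with h | h | h | h <;> subst h <;>
    (intro x y z hxy hyz; simp only [vord] at *; omega)

lemma vord_total {i : ℕ} (h : Oi i) {x y : Pt} (hxy : x ≠ y) :
    vord i x y ∨ vord i y x := by
  rw [prod_ne_iff] at hxy
  rcases h with h | h | h | h <;> subst h <;> (simp only [vord]; omega)

lemma vord_asymm {i : ℕ} (h : Oi i) {x y : Pt} (hxy : vord i x y) : ¬ vord i y x := by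
  rcases h with h | h | h | h <;> subst h <;> (simp only [vord] at *; omega)

lemma grevlex_irrefl {vlt : Pt → Pt → Prop} (m : Pt →₀ ℕ) : ¬ GrevlexLt vlt m m := by
  rintro (h | ⟨-, v, hv, -⟩); · exact lt_irrefl _ h
  · exact lt_irrefl _ hv

lemma grevlex_trans {i : ℕ} (h : Oi i) {m n p : Pt →₀ ℕ}
    (h1 : GrevlexLt (vord i) m n) (h2 : GrevlexLt (vord i) n p) :
    GrevlexLt (vord i) m p := by
  rcases h1 with h1 | ⟨hd1, v1, hv1, hb1⟩
  · rcases h2 with h2 | ⟨hd2, -⟩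
    · exact Or.inl (h1.trans h2)
    · exact Or.inl (hd2 ▸ h1)
  · rcases h2 with h2 | ⟨hd2, v2, hv2, hb2⟩
    · exact Or.inl (hd1 ▸ h2)
    · refine Or.inr ⟨hd1.trans hd2, ?_⟩
      rcases eq_or_ne v1 v2 with rfl | hne
      · exact ⟨v1, hv2.trans hv1, fun w hw => (hb1 w hw).trans (hb2 w hw)⟩
      · rcases vord_total h hne with hlt | hlt
        · refine ⟨v1, ?_, fun w hw => (hb1 w hw).trans (hb2 w (vord_trans h hw hlt))⟩
          rw [← hb2 v1 hlt]; exact hv1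
        · refine ⟨v2, ?_, fun w hw => (hb1 w (vord_trans h hw hlt)).trans (hb2 w hw)⟩
          rw [hb1 v2 hlt]; exact hv2

lemma grevlex_asymm {i : ℕ} (h : Oi i) {m n : Pt →₀ ℕ}
    (h1 : GrevlexLt (vord i) m n) : ¬ GrevlexLt (vord i) n m := fun h2 =>
  grevlex_irrefl m (grevlex_trans h h1 h2)

/-! #### Monomial degree -/

lemma mdeg_add (m n : Pt →₀ ℕ) : mdeg (m + n) = mdeg m + mdeg n :=
  Finsupp.sum_add_index' (fun _ => rfl) (fun _ _ _ => rfl)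

/-- `x_v` as exponent vector. -/
noncomputable def sgl (v : Pt) : Pt →₀ ℕ := Finsupp.single v 1

/-- the diagonal monomial of the interval `[a,b]`. -/
noncomputable def dg (a b : Pt) : Pt →₀ ℕ := sgl a + sgl b

/-- the antidiagonal monomial of the interval `[a,b]`. -/
noncomputable def adg (a b : Pt) : Pt →₀ ℕ := sgl (a.1, b.2) + sgl (b.1, a.2)

lemma mdeg_sgl (v : Pt) : mdeg (sgl v) = 1 := Finsupp.sum_single_index rfl

lemma mdeg_dg (a b : Pt) : mdeg (dg a b) = 2 := by
  rw [dg, mdeg_add, mdeg_sgl, mdeg_sgl]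

lemma mdeg_adg (a b : Pt) : mdeg (adg a b) = 2 := by
  rw [adg, mdeg_add, mdeg_sgl, mdeg_sgl]

lemma apply_le_mdeg (m : Pt →₀ ℕ) (v : Pt) : m v ≤ mdeg m := by
  by_cases hv : v ∈ m.support
  · exact Finset.single_le_sum (f := fun v => m v) (fun _ _ => Nat.zero_le _) hv
  · simp [Finsupp.notMem_support_iff.mp hv]

lemma sgl_apply (v w : Pt) : sgl v w = if v = w then 1 else 0 := Finsupp.single_apply

end Aux
section Aux2

open Finsupp

variable {i : ℕ} {a b : Pt}

lemma corner_min (h : Oi i) (h1 : a.1 < b.1) (h2 : a.2 < b.2) :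
    ∃ v, (v = (a.1, b.2) ∨ v = (b.1, a.2)) ∧
      ∀ u : Pt, (u = a ∨ u = b ∨ u = (a.1, b.2) ∨ u = (b.1, a.2)) → u ≠ v → vord i v u := by
  obtain ⟨a1, a2⟩ := a; obtain ⟨b1, b2⟩ := b
  simp only at h1 h2
  rcases h with h | h | h | h <;> subst h
  · refine ⟨(a1, b2), Or.inl rfl, ?_⟩
    rintro u (rfl | rfl | rfl | rfl) hne <;>
      first
        | exact absurd rfl hne
        | (simp only [vord, true_and, and_true]; omega)
  · refine ⟨(b1, a2), Or.inr rfl, ?_⟩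
    rintro u (rfl | rfl | rfl | rfl) hne <;>
      first
        | exact absurd rfl hne
        | (simp only [vord, true_and, and_true]; omega)
  · refine ⟨(b1, a2), Or.inr rfl, ?_⟩
    rintro u (rfl | rfl | rfl | rfl) hne <;>
      first
        | exact absurd rfl hne
        | (simp only [vord, true_and, and_true]; omega)
  · refine ⟨(a1, b2), Or.inl rfl, ?_⟩
    rintro u (rfl | rfl | rfl | rfl) hne <;>
      first
        | exact absurd rfl hne
        | (simp only [vord, true_and, and_true]; omega)

lemma corners_ne (h1 : a.1 < b.1) (h2 : a.2 < b.2) :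
    a ≠ b ∧ a ≠ (a.1, b.2) ∧ a ≠ (b.1, a.2) ∧ b ≠ (a.1, b.2) ∧ b ≠ (b.1, a.2) ∧
      ((a.1, b.2) : Pt) ≠ (b.1, a.2) := by
  obtain ⟨a1, a2⟩ := a; obtain ⟨b1, b2⟩ := b
  simp only [ne_eq, Prod.mk.injEq, not_and] at *
  refine ⟨?_, ?_, ?_, ?_, ?_, ?_⟩ <;> intros <;> omega

lemma dg_apply_eq_zero {v : Pt} (hva : v ≠ a) (hvb : v ≠ b) : dg a b v = 0 := by
  simp [dg, sgl_apply, Finsupp.add_apply, Ne.symm hva, Ne.symm hvb]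

lemma adg_apply_eq_zero {v : Pt} (hva : v ≠ (a.1, b.2)) (hvb : v ≠ (b.1, a.2)) :
    adg a b v = 0 := by
  simp [adg, sgl_apply, Finsupp.add_apply, Ne.symm hva, Ne.symm hvb]

/-- The key monotonicity: replacing a diagonal by the antidiagonal strictly
decreases the grevlex order, for every odd order. -/
lemma step_decrease (h : Oi i) (h1 : a.1 < b.1) (h2 : a.2 < b.2) (u : Pt →₀ ℕ) :
    GrevlexLt (vord i) (u + adg a b) (u + dg a b) := by
  obtain ⟨hab, hac, had, hbc, hbd, hcd⟩ := corners_ne h1 h2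
  obtain ⟨v, hv, hmin⟩ := corner_min h h1 h2
  refine Or.inr ⟨by rw [mdeg_add, mdeg_add, mdeg_dg, mdeg_adg], v, ?_, ?_⟩
  · have hvd : dg a b v = 0 := by
      rcases hv with rfl | rfl
      · exact dg_apply_eq_zero (Ne.symm hac) (Ne.symm hbc)
      · exact dg_apply_eq_zero (Ne.symm had) (Ne.symm hbd)
    have hva : adg a b v = 1 := by
      rcases hv with rfl | rfl <;>
        simp [adg, sgl_apply, Finsupp.add_apply, hcd, hcd.symm]
    simp only [Finsupp.add_apply, hvd, hva]; omega
  · intro w hw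
    have hwv : w ≠ v := fun hwv => grevlex_irrefl (m := 0) (vlt := vord i) (by
      exact absurd (hwv ▸ hw) (fun hh => (vord_asymm h hh) hh)) |>.elim
    -- cleaner: w ≠ v since vord is irreflexive
    have hw4 : ¬ (w = a ∨ w = b ∨ w = (a.1, b.2) ∨ w = (b.1, a.2)) := by
      intro hcase
      rcases eq_or_ne w v with rfl | hne
      · exact (vord_asymm h hw) hw
      · exact (vord_asymm h (hmin w hcase hne)) hw
    push_neg at hw4
    obtain ⟨w1, w2, w3, w4⟩ := hw4
    simp only [Finsupp.add_apply, dg_apply_eq_zero w1 w2, adg_apply_eq_zero w3 w4]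

end Aux2
section Aux3

open Finsupp

variable {K : Type*} [Field K] {i : ℕ} {a b : Pt} {P : Finset Pt}

lemma innerMinor_eq (a b : Pt) :
    innerMinor K a b = monomial (dg a b) 1 - monomial (adg a b) 1 := by
  rw [innerMinor, X, X, X, X, monomial_mul, monomial_mul, one_mul]
  rfl

lemma dg_ne_adg (h1 : a.1 < b.1) (h2 : a.2 < b.2) : dg a b ≠ adg a b := by
  obtain ⟨hab, hac, had, hbc, hbd, hcd⟩ := corners_ne h1 h2
  intro h
  have := DFunLike.congr_fun h a
  simp only [dg, adg, Finsupp.add_apply, sgl_apply] at this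
  simp [Ne.symm hab, Ne.symm hac, Ne.symm had] at this

lemma support_innerMinor (h1 : a.1 < b.1) (h2 : a.2 < b.2) :
    (innerMinor K a b).support = {dg a b, adg a b} := by
  have hne := dg_ne_adg (a := a) (b := b) h1 h2
  rw [innerMinor_eq]
  ext m
  simp only [MvPolynomial.mem_support_iff, MvPolynomial.coeff_sub, coeff_monomial, Finset.mem_insert,
    Finset.mem_singleton]
  rcases eq_or_ne m (dg a b) with rfl | hd
  · simp [Ne.symm hne]
  · rcases eq_or_ne m (adg a b) with rfl | ha
    · simp [hne, Ne.symm hne]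
    · simp [Ne.symm hd, Ne.symm ha, hd, ha]

lemma coeff_dg_innerMinor (h1 : a.1 < b.1) (h2 : a.2 < b.2) :
    coeff (dg a b) (innerMinor K a b) = 1 := by
  have hne := dg_ne_adg (a := a) (b := b) h1 h2
  rw [innerMinor_eq, coeff_sub, coeff_monomial, coeff_monomial, if_pos rfl,
    if_neg (Ne.symm hne), sub_zero]

lemma adg_grevlexLt_dg (h : Oi i) (h1 : a.1 < b.1) (h2 : a.2 < b.2) :
    GrevlexLt (vord i) (adg a b) (dg a b) := by
  have := step_decrease h h1 h2 0
  simpa using this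

lemma isLeadMon_innerMinor (h : Oi i) (h1 : a.1 < b.1) (h2 : a.2 < b.2) :
    IsLeadMon (GrevlexLt (vord i)) (innerMinor K a b) (dg a b) := by
  constructor
  · rw [support_innerMinor h1 h2]; simp
  · intro m' hm' hne
    rw [support_innerMinor h1 h2] at hm'
    simp only [Finset.mem_insert, Finset.mem_singleton] at hm'
    rcases hm' with rfl | rfl
    · exact absurd rfl hne
    · exact adg_grevlexLt_dg (i := i) h h1 h2

lemma leadMon_innerMinor_unique (h : Oi i) (h1 : a.1 < b.1) (h2 : a.2 < b.2)
    {m : Pt →₀ ℕ} (hm : IsLeadMon (GrevlexLt (vord i)) (innerMinor K a b) m) :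
    m = dg a b := by
  obtain ⟨hmem, hlt⟩ := hm
  rw [support_innerMinor h1 h2] at hmem
  simp only [Finset.mem_insert, Finset.mem_singleton] at hmem
  rcases hmem with rfl | rfl
  · rfl
  · exfalso
    have hdg : dg a b ∈ (innerMinor K a b).support := by
      rw [support_innerMinor h1 h2]; simp
    have := hlt _ hdg (dg_ne_adg h1 h2)
    exact grevlex_asymm h (adg_grevlexLt_dg (i := i) h h1 h2) this

/-! #### The reduction relation on monomials -/

/-- One-step reduction of monomials given by the inner 2-minors of `P`. -/
def Red (P : Finset Pt) (m m' : Pt →₀ ℕ) : Prop :=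
  ∃ u a b, IsInnerInterval P a b ∧ m = u + dg a b ∧ m' = u + adg a b

/-- Many-step reduction. -/
abbrev RedS (P : Finset Pt) := Relation.ReflTransGen (Red P)

lemma red_decrease (h : Oi i) {m m' : Pt →₀ ℕ} (hr : Red P m m') :
    GrevlexLt (vord i) m' m := by
  obtain ⟨u, a, b, hin, rfl, rfl⟩ := hr
  exact step_decrease h hin.1 hin.2.1 u

lemma redS_decrease (h : Oi i) {m m' : Pt →₀ ℕ} (hr : RedS P m m') :
    m' = m ∨ GrevlexLt (vord i) m' m := by
  induction hr with
  | refl => exact Or.inl rfl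
  | tail _ hstep ih =>
      rcases ih with rfl | ih
      · exact Or.inr (red_decrease (i := i) h hstep)
      · exact Or.inr (grevlex_trans h (red_decrease (i := i) h hstep) ih)

lemma red_mdeg {m m' : Pt →₀ ℕ} (hr : Red P m m') : mdeg m' = mdeg m := by
  obtain ⟨u, a, b, hin, rfl, rfl⟩ := hr
  rw [mdeg_add, mdeg_add, mdeg_dg, mdeg_adg]

lemma adg_corners_mem_vertexSet (hin : IsInnerInterval P a b) :
    ((a.1, b.2) : Pt) ∈ vertexSet P ∧ ((b.1, a.2) : Pt) ∈ vertexSet P := by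
  obtain ⟨h1, h2, hcell⟩ := hin
  constructor
  · have hc : ((a.1, b.2 - 1) : Pt) ∈ P := by
      refine hcell _ le_rfl h1 ?_ ?_ <;> simp <;> omega
    refine Finset.mem_biUnion.mpr ⟨_, hc, ?_⟩
    simp only [cellVerts, Finset.mem_insert, Finset.mem_singleton]
    right; right; left
    refine Prod.ext rfl ?_
    show b.2 = b.2 - 1 + 1
    omega
  · have hc : ((b.1 - 1, a.2) : Pt) ∈ P := by
      refine hcell _ ?_ ?_ le_rfl h2 <;> simp <;> omega
    refine Finset.mem_biUnion.mpr ⟨_, hc, ?_⟩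
    simp only [cellVerts, Finset.mem_insert, Finset.mem_singleton]
    right; left
    refine Prod.ext ?_ rfl
    show b.1 = b.1 - 1 + 1
    omega

lemma supp_le_supp_add (u v : Pt →₀ ℕ) : u.support ⊆ (u + v).support := by
  intro x hx
  simp only [Finsupp.mem_support_iff, Finsupp.add_apply] at *
  omega

lemma red_supp {m m' : Pt →₀ ℕ} (hr : Red P m m') :
    m'.support ⊆ m.support ∪ vertexSet P := by
  classical
  obtain ⟨u, a, b, hin, rfl, rfl⟩ := hr
  intro x hx
  rcases Finset.mem_union.mp (Finsupp.support_add hx) with hx | hx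
  · exact Finset.mem_union_left _ (supp_le_supp_add _ _ hx)
  · have hx' : x = (a.1, b.2) ∨ x = (b.1, a.2) := by
      rcases Finset.mem_union.mp (Finsupp.support_add hx) with hx | hx
      · exact Or.inl (Finset.mem_singleton.mp (Finsupp.support_single_subset hx))
      · exact Or.inr (Finset.mem_singleton.mp (Finsupp.support_single_subset hx))
    obtain ⟨hc, hd⟩ := adg_corners_mem_vertexSet hin
    rcases hx' with rfl | rfl <;> exact Finset.mem_union_right _ (by assumption)

end Aux3
section Aux4

open Finsupp Relation

variable {P : Finset Pt}

lemma adg_mk (a1 a2 b1 b2 : ℕ) :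
    adg (a1, a2) (b1, b2) = sgl (a1, b2) + sgl (b1, a2) := rfl

lemma inner' {a1 a2 b1 b2 : ℕ} (h1 : a1 < b1) (h2 : a2 < b2)
    (hc : ∀ x y : ℕ, a1 ≤ x → x < b1 → a2 ≤ y → y < b2 → (x, y) ∈ P) :
    IsInnerInterval P (a1, a2) (b1, b2) := by
  refine ⟨h1, h2, fun e e1 e2 e3 e4 => ?_⟩
  have := hc e.1 e.2 e1 e2 e3 e4
  rwa [Prod.mk.eta] at this

lemma inner_mem {a1 a2 b1 b2 x y : ℕ} (h : IsInnerInterval P (a1, a2) (b1, b2))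
    (h1 : a1 ≤ x) (h2 : x < b1) (h3 : a2 ≤ y) (h4 : y < b2) : (x, y) ∈ P :=
  h.2.2 (x, y) h1 h2 h3 h4

lemma sgl_decomp {u₁ u₂ : Pt →₀ ℕ} {x y : Pt} (hxy : x ≠ y)
    (h : u₁ + sgl x = u₂ + sgl y) : ∃ t, u₁ = t + sgl y ∧ u₂ = t + sgl x := by
  have hy : sgl y ≤ u₁ := by
    rw [Finsupp.le_def]
    intro v
    have hv := DFunLike.congr_fun h v
    simp only [Finsupp.add_apply, sgl_apply] at hv ⊢
    rcases eq_or_ne y v with rfl | hne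
    · have hxv : x ≠ y := hxy
      rw [if_pos rfl] at hv ⊢
      rw [if_neg hxv] at hv
      omega
    · rw [if_neg hne]
      exact Nat.zero_le _
  obtain ⟨t, ht⟩ := le_iff_exists_add.mp hy
  rw [add_comm] at ht
  refine ⟨t, ht, ?_⟩
  apply add_right_cancel (b := sgl y)
  calc u₂ + sgl y = u₁ + sgl x := h.symm
  _ = t + sgl y + sgl x := by rw [ht]
  _ = (t + sgl x) + sgl y := by abel

/-- Case of two inner intervals `[a,b]`, `[b,e]` meeting in one corner `b`:
here the hypothesis of the proposition is used. -/
lemma caseB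
    (hrhs : ∀ a b e : Pt, IsInnerInterval P a b → IsInnerInterval P b e →
      (IsInnerInterval P a (b.1, e.2) ∨ IsInnerInterval P a (e.1, b.2)))
    {a b e : Pt} (hab : IsInnerInterval P a b) (hbe : IsInnerInterval P b e)
    (t : Pt →₀ ℕ) :
    ∃ n, RedS P (t + sgl e + adg a b) n ∧ RedS P (t + sgl a + adg b e) n := by
  obtain ⟨a1, a2⟩ := a; obtain ⟨b1, b2⟩ := b; obtain ⟨e1, e2⟩ := e
  have hab1 : a1 < b1 := hab.1
  have hab2 : a2 < b2 := hab.2.1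
  have hbe1 : b1 < e1 := hbe.1
  have hbe2 : b2 < e2 := hbe.2.1
  rcases hrhs _ _ _ hab hbe with haf | hag
  · -- `[a, (b1,e2)]` is inner
    have hce : IsInnerInterval P (a1, b2) (e1, e2) := by
      refine inner' (by omega) (by omega) ?_
      intro x y hx1 hx2 hy1 hy2
      by_cases hx : x < b1
      · exact inner_mem haf (by omega) (by omega) (by omega) (by omega)
      · exact inner_mem hbe (by omega) (by omega) (by omega) (by omega)
    refine ⟨t + sgl (b1, a2) + sgl (a1, e2) + sgl (e1, b2), ?_, ?_⟩
    · refine ReflTransGen.single ⟨t + sgl (b1, a2), _, _, hce, ?_, ?_⟩ <;>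
        (simp only [dg, adg_mk]; try abel)
    · refine ReflTransGen.single ⟨t + sgl (e1, b2), _, _, haf, ?_, ?_⟩ <;>
        (simp only [dg, adg_mk]; try abel)
  · -- `[a, (e1,b2)]` is inner
    have hde : IsInnerInterval P (b1, a2) (e1, e2) := by
      refine inner' (by omega) (by omega) ?_
      intro x y hx1 hx2 hy1 hy2
      by_cases hy : y < b2
      · exact inner_mem hag (by omega) (by omega) (by omega) (by omega)
      · exact inner_mem hbe (by omega) (by omega) (by omega) (by omega)
    refine ⟨t + sgl (a1, b2) + sgl (b1, e2) + sgl (e1, a2), ?_, ?_⟩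
    · refine ReflTransGen.single ⟨t + sgl (a1, b2), _, _, hde, ?_, ?_⟩ <;>
        (simp only [dg, adg_mk]; try abel)
    · refine ReflTransGen.single ⟨t + sgl (b1, e2), _, _, hag, ?_, ?_⟩ <;>
        (simp only [dg, adg_mk]; try abel)

/-- Half of the case of two inner intervals sharing the lower corner. -/
lemma caseC' {a b e : Pt} (hab : IsInnerInterval P a b) (hae : IsInnerInterval P a e)
    (hcmp : b.1 < e.1 ∨ (b.1 = e.1 ∧ b.2 < e.2)) (t : Pt →₀ ℕ) :
    ∃ n, RedS P (t + sgl e + adg a b) n ∧ RedS P (t + sgl b + adg a e) n := by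
  obtain ⟨a1, a2⟩ := a; obtain ⟨b1, b2⟩ := b; obtain ⟨e1, e2⟩ := e
  have hab1 : a1 < b1 := hab.1
  have hab2 : a2 < b2 := hab.2.1
  have hae1 : a1 < e1 := hae.1
  have hae2 : a2 < e2 := hae.2.1
  simp only at hcmp
  rcases hcmp with hb1e1 | ⟨hb1e1, hb2e2⟩
  · -- b1 < e1
    rcases lt_trichotomy b2 e2 with hb2e2 | hb2e2 | hb2e2
    · -- C1 : two steps from m₁ to m₂
      have hce : IsInnerInterval P (a1, b2) (e1, e2) := by
        refine inner' (by omega) (by omega) ?_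
        intro x y hx1 hx2 hy1 hy2
        exact inner_mem hae (by omega) (by omega) (by omega) (by omega)
      have hdg2 : IsInnerInterval P (b1, a2) (e1, b2) := by
        refine inner' (by omega) (by omega) ?_
        intro x y hx1 hx2 hy1 hy2
        exact inner_mem hae (by omega) (by omega) (by omega) (by omega)
      refine ⟨t + sgl (b1, b2) + adg (a1, a2) (e1, e2), ?_, ReflTransGen.refl⟩
      have s1 : Red P (t + sgl (e1, e2) + adg (a1, a2) (b1, b2))
          (t + sgl (b1, a2) + adg (a1, b2) (e1, e2)) :=
        ⟨t + sgl (b1, a2), _, _, hce, by simp only [dg, adg_mk]; try abel,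
          by simp only [dg, adg_mk]; try abel⟩
      have s2 : Red P (t + sgl (b1, a2) + adg (a1, b2) (e1, e2))
          (t + sgl (b1, b2) + adg (a1, a2) (e1, e2)) :=
        ⟨t + sgl (a1, e2), _, _, hdg2, by simp only [dg, adg_mk]; try abel,
          by simp only [dg, adg_mk]; try abel⟩
      exact ReflTransGen.head s1 (ReflTransGen.single s2)
    · -- C2 : b2 = e2, one step
      subst hb2e2
      have hde : IsInnerInterval P (b1, a2) (e1, b2) := by
        refine inner' (by omega) (by omega) ?_
        intro x y hx1 hx2 hy1 hy2
        exact inner_mem hae (by omega) (by omega) (by omega) (by omega)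
      refine ⟨t + sgl (b1, b2) + adg (a1, a2) (e1, b2), ?_, ReflTransGen.refl⟩
      refine ReflTransGen.single ⟨t + sgl (a1, b2), _, _, hde, ?_, ?_⟩ <;>
        (simp only [dg, adg_mk]; try abel)
    · -- C4 : e2 < b2, one step on each side
      have hde : IsInnerInterval P (b1, a2) (e1, e2) := by
        refine inner' (by omega) (by omega) ?_
        intro x y hx1 hx2 hy1 hy2
        exact inner_mem hae (by omega) (by omega) (by omega) (by omega)
      have hcb : IsInnerInterval P (a1, e2) (b1, b2) := by
        refine inner' (by omega) (by omega) ?_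
        intro x y hx1 hx2 hy1 hy2
        exact inner_mem hab (by omega) (by omega) (by omega) (by omega)
      refine ⟨t + sgl (a1, b2) + sgl (b1, e2) + sgl (e1, a2), ?_, ?_⟩
      · refine ReflTransGen.single ⟨t + sgl (a1, b2), _, _, hde, ?_, ?_⟩ <;>
          (simp only [dg, adg_mk]; try abel)
      · refine ReflTransGen.single ⟨t + sgl (e1, a2), _, _, hcb, ?_, ?_⟩ <;>
          (simp only [dg, adg_mk]; try abel)
  · -- C3 : b1 = e1, b2 < e2, one step
    subst hb1e1
    have hce : IsInnerInterval P (a1, b2) (b1, e2) := by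
      refine inner' (by omega) (by omega) ?_
      intro x y hx1 hx2 hy1 hy2
      exact inner_mem hae (by omega) (by omega) (by omega) (by omega)
    refine ⟨t + sgl (b1, b2) + adg (a1, a2) (b1, e2), ?_, ReflTransGen.refl⟩
    refine ReflTransGen.single ⟨t + sgl (b1, a2), _, _, hce, ?_, ?_⟩ <;>
      (simp only [dg, adg_mk]; try abel)

/-- The case of two inner intervals sharing the lower corner. -/
lemma caseC {a b e : Pt} (hab : IsInnerInterval P a b) (hae : IsInnerInterval P a e)
    (hbe : b ≠ e) (t : Pt →₀ ℕ) :
    ∃ n, RedS P (t + sgl e + adg a b) n ∧ RedS P (t + sgl b + adg a e) n := by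
  by_cases hcmp : b.1 < e.1 ∨ (b.1 = e.1 ∧ b.2 < e.2)
  · exact caseC' hab hae hcmp t
  · have hcmp' : e.1 < b.1 ∨ (e.1 = b.1 ∧ e.2 < b.2) := by
      rw [prod_ne_iff] at hbe; push_neg at hcmp; omega
    obtain ⟨n, h1, h2⟩ := caseC' hae hab hcmp' t
    exact ⟨n, h2, h1⟩

/-- Half of the case of two inner intervals sharing the upper corner. -/
lemma caseD' {a b p : Pt} (hab : IsInnerInterval P a b) (hpb : IsInnerInterval P p b)
    (hcmp : a.1 < p.1 ∨ (a.1 = p.1 ∧ a.2 < p.2)) (t : Pt →₀ ℕ) :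
    ∃ n, RedS P (t + sgl p + adg a b) n ∧ RedS P (t + sgl a + adg p b) n := by
  obtain ⟨a1, a2⟩ := a; obtain ⟨b1, b2⟩ := b; obtain ⟨p1, p2⟩ := p
  have hab1 : a1 < b1 := hab.1
  have hab2 : a2 < b2 := hab.2.1
  have hpb1 : p1 < b1 := hpb.1
  have hpb2 : p2 < b2 := hpb.2.1
  simp only at hcmp
  rcases hcmp with ha1p1 | ⟨ha1p1, ha2p2⟩
  · rcases lt_trichotomy a2 p2 with ha2p2 | ha2p2 | ha2p2
    · -- D1 : two steps from m₂ to m₁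
      have hac : IsInnerInterval P (a1, a2) (p1, b2) := by
        refine inner' (by omega) (by omega) ?_
        intro x y hx1 hx2 hy1 hy2
        exact inner_mem hab (by omega) (by omega) (by omega) (by omega)
      have hkd : IsInnerInterval P (p1, a2) (b1, p2) := by
        refine inner' (by omega) (by omega) ?_
        intro x y hx1 hx2 hy1 hy2
        exact inner_mem hab (by omega) (by omega) (by omega) (by omega)
      refine ⟨t + sgl (p1, p2) + adg (a1, a2) (b1, b2), ReflTransGen.refl, ?_⟩
      have s1 : Red P (t + sgl (a1, a2) + adg (p1, p2) (b1, b2))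
          (t + sgl (b1, p2) + adg (a1, a2) (p1, b2)) :=
        ⟨t + sgl (b1, p2), _, _, hac, by simp only [dg, adg_mk]; try abel,
          by simp only [dg, adg_mk]; try abel⟩
      have s2 : Red P (t + sgl (b1, p2) + adg (a1, a2) (p1, b2))
          (t + sgl (p1, p2) + adg (a1, a2) (b1, b2)) :=
        ⟨t + sgl (a1, b2), _, _, hkd, by simp only [dg, adg_mk]; try abel,
          by simp only [dg, adg_mk]; try abel⟩
      exact ReflTransGen.head s1 (ReflTransGen.single s2)
    · -- D2 : a2 = p2, one step
      subst ha2p2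
      have hac : IsInnerInterval P (a1, a2) (p1, b2) := by
        refine inner' (by omega) (by omega) ?_
        intro x y hx1 hx2 hy1 hy2
        exact inner_mem hab (by omega) (by omega) (by omega) (by omega)
      refine ⟨t + sgl (p1, a2) + adg (a1, a2) (b1, b2), ReflTransGen.refl, ?_⟩
      refine ReflTransGen.single ⟨t + sgl (b1, a2), _, _, hac, ?_, ?_⟩ <;>
        (simp only [dg, adg_mk]; try abel)
    · -- D3 : p2 < a2, one step on each side
      have hpd : IsInnerInterval P (p1, p2) (b1, a2) := by
        refine inner' (by omega) (by omega) ?_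
        intro x y hx1 hx2 hy1 hy2
        exact inner_mem hpb (by omega) (by omega) (by omega) (by omega)
      have hac : IsInnerInterval P (a1, a2) (p1, b2) := by
        refine inner' (by omega) (by omega) ?_
        intro x y hx1 hx2 hy1 hy2
        exact inner_mem hab (by omega) (by omega) (by omega) (by omega)
      refine ⟨t + sgl (a1, b2) + sgl (p1, a2) + sgl (b1, p2), ?_, ?_⟩
      · refine ReflTransGen.single ⟨t + sgl (a1, b2), _, _, hpd, ?_, ?_⟩ <;>
          (simp only [dg, adg_mk]; try abel)
      · refine ReflTransGen.single ⟨t + sgl (b1, p2), _, _, hac, ?_, ?_⟩ <;>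
          (simp only [dg, adg_mk]; try abel)
  · -- D4 : a1 = p1, a2 < p2, one step
    subst ha1p1
    have had : IsInnerInterval P (a1, a2) (b1, p2) := by
      refine inner' (by omega) (by omega) ?_
      intro x y hx1 hx2 hy1 hy2
      exact inner_mem hab (by omega) (by omega) (by omega) (by omega)
    refine ⟨t + sgl (a1, p2) + adg (a1, a2) (b1, b2), ReflTransGen.refl, ?_⟩
    refine ReflTransGen.single ⟨t + sgl (a1, b2), _, _, had, ?_, ?_⟩ <;>
      (simp only [dg, adg_mk]; try abel)

/-- The case of two inner intervals sharing the upper corner. -/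
lemma caseD {a b p : Pt} (hab : IsInnerInterval P a b) (hpb : IsInnerInterval P p b)
    (hap : a ≠ p) (t : Pt →₀ ℕ) :
    ∃ n, RedS P (t + sgl p + adg a b) n ∧ RedS P (t + sgl a + adg p b) n := by
  by_cases hcmp : a.1 < p.1 ∨ (a.1 = p.1 ∧ a.2 < p.2)
  · exact caseD' hab hpb hcmp t
  · have hcmp' : p.1 < a.1 ∨ (p.1 = a.1 ∧ p.2 < a.2) := by
      rw [prod_ne_iff] at hap; push_neg at hcmp; omega
    obtain ⟨n, h1, h2⟩ := caseD' hpb hab hcmp' t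
    exact ⟨n, h2, h1⟩

end Aux4
section Aux5

open Finsupp Relation

variable {P : Finset Pt} {i : ℕ}

lemma dg_apply_pos {a b v : Pt} (h : 0 < dg a b v) : v = a ∨ v = b := by
  by_contra hc
  push_neg at hc
  rw [dg_apply_eq_zero hc.1 hc.2] at h
  exact absurd h (lt_irrefl 0)

/-- Local confluence of the reduction, under the interval condition. -/
lemma local_confluence
    (hrhs : ∀ a b e : Pt, IsInnerInterval P a b → IsInnerInterval P b e →
      (IsInnerInterval P a (b.1, e.2) ∨ IsInnerInterval P a (e.1, b.2)))
    {m m₁ m₂ : Pt →₀ ℕ} (h₁ : Red P m m₁) (h₂ : Red P m m₂) :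
    ∃ n, RedS P m₁ n ∧ RedS P m₂ n := by
  obtain ⟨u₁, a, b, hab, hm1, rfl⟩ := h₁
  obtain ⟨u₂, p, q, hpq, hm2, rfl⟩ := h₂
  have E : u₁ + dg a b = u₂ + dg p q := hm1 ▸ hm2
  by_cases hle : dg a b ≤ u₂
  · -- disjoint (commuting) case
    obtain ⟨s, hs⟩ := le_iff_exists_add.mp hle
    have hu₁ : u₁ = s + dg p q := by
      apply add_right_cancel (b := dg a b)
      calc u₁ + dg a b = u₂ + dg p q := E
      _ = dg a b + s + dg p q := by rw [hs]
      _ = (s + dg p q) + dg a b := by abel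
    refine ⟨s + adg a b + adg p q, ?_, ?_⟩
    · refine ReflTransGen.single ⟨s + adg a b, p, q, hpq, ?_, ?_⟩
      · rw [hu₁]; abel
      · abel
    · refine ReflTransGen.single ⟨s + adg p q, a, b, hab, ?_, ?_⟩
      · rw [hs]; abel
      · abel
  · -- there is a shared diagonal corner
    rw [Finsupp.le_def] at hle
    push_neg at hle
    obtain ⟨v, hv⟩ := hle
    have hvab : v = a ∨ v = b := dg_apply_pos (lt_of_le_of_lt (Nat.zero_le _) hv)
    have hvpq : v = p ∨ v = q := by
      apply dg_apply_pos
      have hE := DFunLike.congr_fun E v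
      simp only [Finsupp.add_apply] at hE
      omega
    -- helper to cancel the shared variable in `E`
    rcases hvab with rfl | rfl
    · rcases hvpq with rfl | rfl
      · -- shared lower corner : v = a = p
        by_cases hbq : b = q
        · subst hbq
          have : u₁ = u₂ := by
            apply add_right_cancel (b := dg v b); exact E
          subst this
          exact ⟨u₁ + adg v b, ReflTransGen.refl, ReflTransGen.refl⟩
        · have key : u₁ + sgl b = u₂ + sgl q := by
            apply add_right_cancel (b := sgl v)
            calc u₁ + sgl b + sgl v = u₁ + dg v b := by simp only [dg]; abel
            _ = u₂ + dg v q := E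
            _ = u₂ + sgl q + sgl v := by simp only [dg]; abel
          obtain ⟨t, ht1, ht2⟩ := sgl_decomp hbq key
          obtain ⟨n, hn1, hn2⟩ := caseC hab hpq hbq t
          refine ⟨n, ?_, ?_⟩
          · convert hn1 using 2
          · convert hn2 using 2
      · -- v = a = q : configuration `[p,v]`, `[v,b]`
        have hpb : p ≠ b := by
          have h1 : p.1 < v.1 := hpq.1
          have h2 : v.1 < b.1 := hab.1
          rw [prod_ne_iff]; left; omega
        have key : u₂ + sgl p = u₁ + sgl b := by
          apply add_right_cancel (b := sgl v)
          calc u₂ + sgl p + sgl v = u₂ + dg p v := by simp only [dg]; abel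
          _ = u₁ + dg v b := E.symm
          _ = u₁ + sgl b + sgl v := by simp only [dg]; abel
        obtain ⟨t, ht2, ht1⟩ := sgl_decomp hpb key
        obtain ⟨n, hn2, hn1⟩ := caseB hrhs hpq hab t
        refine ⟨n, ?_, ?_⟩
        · convert hn1 using 2
        · convert hn2 using 2
    · rcases hvpq with rfl | rfl
      · -- v = b = p : configuration `[a,v]`, `[v,q]`
        have haq : a ≠ q := by
          have h1 : a.1 < v.1 := hab.1
          have h2 : v.1 < q.1 := hpq.1
          rw [prod_ne_iff]; left; omega
        have key : u₁ + sgl a = u₂ + sgl q := by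
          apply add_right_cancel (b := sgl v)
          calc u₁ + sgl a + sgl v = u₁ + dg a v := by simp only [dg]; abel
          _ = u₂ + dg v q := E
          _ = u₂ + sgl q + sgl v := by simp only [dg]; abel
        obtain ⟨t, ht1, ht2⟩ := sgl_decomp haq key
        obtain ⟨n, hn1, hn2⟩ := caseB hrhs hab hpq t
        refine ⟨n, ?_, ?_⟩
        · convert hn1 using 2
        · convert hn2 using 2
      · -- shared upper corner : v = b = q
        by_cases hap : a = p
        · subst hap
          have : u₁ = u₂ := by
            apply add_right_cancel (b := dg a v); exact E
          subst this
          exact ⟨u₁ + adg a v, ReflTransGen.refl, ReflTransGen.refl⟩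
        · have key : u₁ + sgl a = u₂ + sgl p := by
            apply add_right_cancel (b := sgl v)
            calc u₁ + sgl a + sgl v = u₁ + dg a v := by simp only [dg]; abel
            _ = u₂ + dg p v := E
            _ = u₂ + sgl p + sgl v := by simp only [dg]; abel
          obtain ⟨t, ht1, ht2⟩ := sgl_decomp hap key
          obtain ⟨n, hn1, hn2⟩ := caseD hab hpq hap t
          refine ⟨n, ?_, ?_⟩
          · convert hn1 using 2
          · convert hn2 using 2

end Aux5
section Aux6

open Finsupp Relation Classical

variable {P : Finset Pt} {i : ℕ}

/-- The box bound used for the termination measure. -/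
noncomputable def boxOf (W : Finset Pt) (d : ℕ) : Pt →₀ ℕ :=
  W.sum fun v => Finsupp.single v d

lemma le_boxOf {W : Finset Pt} {d : ℕ} {m : Pt →₀ ℕ}
    (hs : m.support ⊆ W) (hd : mdeg m = d) : m ≤ boxOf W d := by
  rw [Finsupp.le_def]
  intro v
  have hbox : boxOf W d v = if v ∈ W then d else 0 := by
    rw [boxOf, Finsupp.finset_sum_apply]
    simp only [Finsupp.single_apply]
    exact Finset.sum_ite_eq' W v fun _ => d
  rw [hbox]
  by_cases hv : v ∈ W
  · rw [if_pos hv]; exact hd ▸ apply_le_mdeg m v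
  · rw [if_neg hv]
    have : v ∉ m.support := fun hc => hv (hs hc)
    simpa [Finsupp.notMem_support_iff] using this

/-- The termination measure. -/
noncomputable def muOf (i : ℕ) (W : Finset Pt) (d : ℕ) (m : Pt →₀ ℕ) : ℕ :=
  ((Finset.Iic (boxOf W d)).filter fun n => GrevlexLt (vord i) n m).card

lemma muOf_lt (hO : Oi i) {W : Finset Pt} {d : ℕ} {m a : Pt →₀ ℕ}
    (hr : Red P m a) (hsm : m.support ⊆ W) (hdm : mdeg m = d)
    (hsa : a.support ⊆ W) (hda : mdeg a = d) :
    muOf i W d a < muOf i W d m := by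
  apply Finset.card_lt_card
  have ham : GrevlexLt (vord i) a m := red_decrease (i := i) hO hr
  have hsub : ((Finset.Iic (boxOf W d)).filter fun n => GrevlexLt (vord i) n a) ⊆
      ((Finset.Iic (boxOf W d)).filter fun n => GrevlexLt (vord i) n m) := by
    intro n hn
    simp only [Finset.mem_filter] at hn ⊢
    exact ⟨hn.1, grevlex_trans hO hn.2 ham⟩
  rw [Finset.ssubset_iff_of_subset hsub]
  refine ⟨a, ?_, ?_⟩
  · simp only [Finset.mem_filter, Finset.mem_Iic]
    exact ⟨le_boxOf hsa hda, ham⟩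
  · simp only [Finset.mem_filter]
    rintro ⟨-, hc⟩
    exact grevlex_irrefl a hc

lemma confluence_aux (hO : Oi i)
    (hrhs : ∀ a b e : Pt, IsInnerInterval P a b → IsInnerInterval P b e →
      (IsInnerInterval P a (b.1, e.2) ∨ IsInnerInterval P a (e.1, b.2)))
    {W : Finset Pt} (hWP : vertexSet P ⊆ W) {d : ℕ} :
    ∀ k : ℕ, ∀ m : Pt →₀ ℕ, m.support ⊆ W → mdeg m = d → muOf i W d m ≤ k →
      ∀ n₁ n₂, RedS P m n₁ → RedS P m n₂ → ∃ z, RedS P n₁ z ∧ RedS P n₂ z := by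
  intro k
  induction k using Nat.strong_induction_on with
  | _ k IH =>
    intro m hsm hdm hμ n₁ n₂ h₁ h₂
    rcases h₁.cases_head with rfl | ⟨a, hma, han₁⟩
    · exact ⟨n₂, h₂, ReflTransGen.refl⟩
    rcases h₂.cases_head with rfl | ⟨b, hmb, hbn₂⟩
    · exact ⟨n₁, ReflTransGen.refl, ReflTransGen.head hma han₁⟩
    -- invariants for `a` and `b`
    have hsa : a.support ⊆ W := fun x hx => by
      rcases Finset.mem_union.mp (red_supp hma hx) with h | h
      exacts [hsm h, hWP h]
    have hda : mdeg a = d := (red_mdeg hma).trans hdm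
    have hsb : b.support ⊆ W := fun x hx => by
      rcases Finset.mem_union.mp (red_supp hmb hx) with h | h
      exacts [hsm h, hWP h]
    have hdb : mdeg b = d := (red_mdeg hmb).trans hdm
    have hμa : muOf i W d a < k :=
      lt_of_lt_of_le (muOf_lt hO hma hsm hdm hsa hda) hμ
    have hμb : muOf i W d b < k :=
      lt_of_lt_of_le (muOf_lt hO hmb hsm hdm hsb hdb) hμ
    obtain ⟨c, hac, hbc⟩ := local_confluence hrhs hma hmb
    obtain ⟨z₁, hn₁z₁, hcz₁⟩ := IH _ hμa a hsa hda le_rfl n₁ c han₁ hac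
    obtain ⟨z, hn₂z, hz₁z⟩ := IH _ hμb b hsb hdb le_rfl n₂ z₁ hbn₂ (hbc.trans hcz₁)
    exact ⟨z, hn₁z₁.trans hz₁z, hn₂z⟩

/-- Confluence of the reduction (Newman's lemma). -/
lemma confluence (hO : Oi i)
    (hrhs : ∀ a b e : Pt, IsInnerInterval P a b → IsInnerInterval P b e →
      (IsInnerInterval P a (b.1, e.2) ∨ IsInnerInterval P a (e.1, b.2)))
    {m n₁ n₂ : Pt →₀ ℕ} (h₁ : RedS P m n₁) (h₂ : RedS P m n₂) :
    ∃ z, RedS P n₁ z ∧ RedS P n₂ z :=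
  confluence_aux hO hrhs (W := m.support ∪ vertexSet P) Finset.subset_union_right
    (d := mdeg m) (muOf i (m.support ∪ vertexSet P) (mdeg m) m) m
    Finset.subset_union_left rfl le_rfl n₁ n₂ h₁ h₂

/-- Joinability of monomials. -/
def Cls (P : Finset Pt) (m n : Pt →₀ ℕ) : Prop := ∃ z, RedS P m z ∧ RedS P n z

lemma cls_refl (m : Pt →₀ ℕ) : Cls P m m := ⟨m, ReflTransGen.refl, ReflTransGen.refl⟩

lemma cls_symm {m n : Pt →₀ ℕ} (h : Cls P m n) : Cls P n m := by
  obtain ⟨z, h1, h2⟩ := h; exact ⟨z, h2, h1⟩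

lemma cls_trans (hO : Oi i)
    (hrhs : ∀ a b e : Pt, IsInnerInterval P a b → IsInnerInterval P b e →
      (IsInnerInterval P a (b.1, e.2) ∨ IsInnerInterval P a (e.1, b.2)))
    {m n p : Pt →₀ ℕ} (h1 : Cls P m n) (h2 : Cls P n p) : Cls P m p := by
  obtain ⟨x, hmx, hnx⟩ := h1
  obtain ⟨y, hny, hpy⟩ := h2
  obtain ⟨z, hxz, hyz⟩ := confluence (i := i) hO hrhs hnx hny
  exact ⟨z, hmx.trans hxz, hpy.trans hyz⟩

lemma cls_of_red {m n : Pt →₀ ℕ} (h : Red P m n) : Cls P m n :=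
  ⟨n, ReflTransGen.single h, ReflTransGen.refl⟩

end Aux6
section Aux7

open Finsupp Relation

open scoped Classical in
/-- Sum of the coefficients of `f` over the monomials joinable with `m`. -/
noncomputable def phi {K : Type*} [Field K] (P : Finset Pt) (m : Pt →₀ ℕ)
    (f : MvPolynomial Pt K) : K :=
  ∑ n ∈ f.support, if Cls P n m then MvPolynomial.coeff n f else 0

variable {K : Type*} [Field K] {P : Finset Pt} {i : ℕ} {m : Pt →₀ ℕ}

open scoped Classical

lemma phi_eq_sum_superset {f : MvPolynomial Pt K} {s : Finset (Pt →₀ ℕ)}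
    (hs : f.support ⊆ s) :
    phi P m f = ∑ n ∈ s, if Cls P n m then MvPolynomial.coeff n f else 0 := by
  rw [phi]
  apply Finset.sum_subset hs
  intro n hns hn
  simp [MvPolynomial.notMem_support_iff.mp hn]

lemma phi_zero : phi P m (0 : MvPolynomial Pt K) = 0 := by
  simp [phi]

lemma phi_add (f g : MvPolynomial Pt K) : phi P m (f + g) = phi P m f + phi P m g := by
  rw [phi_eq_sum_superset (s := f.support ∪ g.support)
      (MvPolynomial.support_add (p := f) (q := g)),
    phi_eq_sum_superset (s := f.support ∪ g.support) Finset.subset_union_left,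
    phi_eq_sum_superset (s := f.support ∪ g.support) Finset.subset_union_right,
    ← Finset.sum_add_distrib]
  refine Finset.sum_congr rfl fun n _ => ?_
  rw [MvPolynomial.coeff_add]
  split <;> simp

/-- `phi` as an additive monoid hom. -/
noncomputable def phiHom (P : Finset Pt) (m : Pt →₀ ℕ) (K : Type*) [Field K] :
    MvPolynomial Pt K →+ K where
  toFun := phi P m
  map_zero' := phi_zero
  map_add' := phi_add

lemma phi_smul (c : K) (f : MvPolynomial Pt K) :
    phi P m (c • f) = c * phi P m f := by
  rw [phi_eq_sum_superset (s := f.support) (MvPolynomial.support_smul), phi,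
    Finset.mul_sum]
  refine Finset.sum_congr rfl fun n _ => ?_
  rw [MvPolynomial.coeff_smul, smul_eq_mul, mul_ite, mul_zero]

lemma phi_monomial (u : Pt →₀ ℕ) (r : K) :
    phi P m (monomial u r) = if Cls P u m then r else 0 := by
  by_cases hr : r = 0
  · simp [phi, hr]
  · rw [phi, MvPolynomial.support_monomial, if_neg hr, Finset.sum_singleton,
      MvPolynomial.coeff_monomial, if_pos rfl]

lemma phi_sub (f g : MvPolynomial Pt K) :
    phi P m (f - g) = phi P m f - phi P m g := by
  have := phi_smul (P := P) (m := m) (-1 : K) g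
  have hneg : phi P m (-g) = - phi P m g := by
    rw [← neg_one_smul K g, this]; ring
  rw [sub_eq_add_neg, phi_add, hneg, sub_eq_add_neg]

/-- `phi` kills the shifted inner minors. -/
lemma phi_shifted_minor (hO : Oi i)
    (hrhs : ∀ a b e : Pt, IsInnerInterval P a b → IsInnerInterval P b e →
      (IsInnerInterval P a (b.1, e.2) ∨ IsInnerInterval P a (e.1, b.2)))
    {a b : Pt} (hin : IsInnerInterval P a b) (w : Pt →₀ ℕ) :
    phi P m ((monomial w (1 : K)) * innerMinor K a b) = 0 := by
  rw [innerMinor_eq, mul_sub, monomial_mul, monomial_mul, one_mul, phi_sub,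
    phi_monomial, phi_monomial]
  have hstep : Cls P (w + dg a b) (w + adg a b) :=
    cls_of_red ⟨w, a, b, hin, rfl, rfl⟩
  have hiff : Cls P (w + dg a b) m ↔ Cls P (w + adg a b) m := by
    constructor
    · intro h; exact cls_trans (i := i) hO hrhs (cls_symm hstep) h
    · intro h; exact cls_trans (i := i) hO hrhs hstep h
  split_ifs with h1 h2 h2
  · ring
  · exact absurd (hiff.mp h1) h2
  · exact absurd (hiff.mpr h2) h1
  · ring

/-- The set of shifted inner minors. -/
def shiftedMinors (K : Type*) [Field K] (P : Finset Pt) :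
    Set (MvPolynomial Pt K) :=
  {q | ∃ (w : Pt →₀ ℕ) (a b : Pt), IsInnerInterval P a b ∧
    q = (monomial w (1 : K)) * innerMinor K a b}

lemma mono_mul_span_shifted {f : MvPolynomial Pt K}
    (hf : f ∈ Submodule.span K (shiftedMinors K P)) (u : Pt →₀ ℕ) :
    (monomial u (1 : K)) * f ∈ Submodule.span K (shiftedMinors K P) := by
  refine Submodule.span_induction
    (p := fun x _ => (monomial u (1 : K)) * x ∈ Submodule.span K (shiftedMinors K P))
    ?_ ?_ ?_ ?_ hf
  · rintro x ⟨w, a, b, hin, rfl⟩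
    refine Submodule.subset_span ⟨u + w, a, b, hin, ?_⟩
    rw [← mul_assoc, monomial_mul, one_mul]
  · simp
  · intro x y _ _ hx hy
    rw [mul_add]; exact Submodule.add_mem _ hx hy
  · intro c x _ hx
    rw [Algebra.mul_smul_comm]; exact Submodule.smul_mem _ _ hx

lemma mul_span_shifted {f : MvPolynomial Pt K}
    (hf : f ∈ Submodule.span K (shiftedMinors K P)) (r : MvPolynomial Pt K) :
    r * f ∈ Submodule.span K (shiftedMinors K P) := by
  induction r using MvPolynomial.induction_on' with
  | monomial u c =>
      have : (monomial u c : MvPolynomial Pt K) = c • monomial u 1 := by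
        rw [smul_monomial, smul_eq_mul, mul_one]
      rw [this, smul_mul_assoc]
      exact Submodule.smul_mem _ _ (mono_mul_span_shifted hf u)
  | add p q hp hq =>
      rw [add_mul]; exact Submodule.add_mem _ hp hq

lemma polyIdeal_le_span_shifted {f : MvPolynomial Pt K}
    (hf : f ∈ polyIdeal K P) : f ∈ Submodule.span K (shiftedMinors K P) := by
  refine Submodule.span_induction
    (p := fun x _ => x ∈ Submodule.span K (shiftedMinors K P)) ?_ ?_ ?_ ?_ hf
  · rintro x ⟨a, b, hin, rfl⟩
    refine Submodule.subset_span ⟨0, a, b, hin, ?_⟩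
    rw [MvPolynomial.monomial_zero', MvPolynomial.C_1, one_mul]
  · simp
  · intro x y _ _ hx hy; exact Submodule.add_mem _ hx hy
  · intro c x _ hx
    rw [smul_eq_mul]; exact mul_span_shifted hx c

/-- `phi` vanishes on the polyomino ideal. -/
lemma phi_polyIdeal (hO : Oi i)
    (hrhs : ∀ a b e : Pt, IsInnerInterval P a b → IsInnerInterval P b e →
      (IsInnerInterval P a (b.1, e.2) ∨ IsInnerInterval P a (e.1, b.2)))
    {f : MvPolynomial Pt K} (hf : f ∈ polyIdeal K P) : phi P m f = 0 := by
  have hf' := polyIdeal_le_span_shifted hf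
  rw [Submodule.mem_span_set] at hf'
  obtain ⟨c, hcs, rfl⟩ := hf'
  have hmap : phi P m (c.sum fun mi r => r • mi) =
      ∑ q ∈ c.support, phi P m (c q • q) :=
    map_sum (phiHom P m K) _ c.support
  rw [hmap]
  refine Finset.sum_eq_zero fun q hq => ?_
  obtain ⟨w, a, b, hin, rfl⟩ := hcs hq
  show phi P m _ = 0
  rw [phi_smul, phi_shifted_minor (i := i) hO hrhs hin w, mul_zero]

/-- If a polynomial lies in a leading-monomial ideal, every monomial of its
support is divisible by one of the leading monomials. -/
lemma lmIdeal_mem_divides {mlt : (Pt →₀ ℕ) → (Pt →₀ ℕ) → Prop}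
    {F : Set (MvPolynomial Pt K)} {p : MvPolynomial Pt K}
    (hp : p ∈ lmIdeal mlt F) {n : Pt →₀ ℕ} (hn : n ∈ p.support) :
    ∃ f ∈ F, ∃ m' : Pt →₀ ℕ, IsLeadMon mlt f m' ∧ m' ≤ n := by
  by_contra hc
  push_neg at hc
  have hzero : MvPolynomial.coeff n p = 0 := by
    have key : ∀ x ∈ lmIdeal mlt F, ∀ r : MvPolynomial Pt K,
        MvPolynomial.coeff n (r * x) = 0 := by
      intro x hx
      refine Submodule.span_induction
        (p := fun x _ => ∀ r : MvPolynomial Pt K, MvPolynomial.coeff n (r * x) = 0)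
        ?_ ?_ ?_ ?_ hx
      · rintro q ⟨f, hf, m', hm', rfl⟩ r
        rw [MvPolynomial.coeff_mul_monomial']
        rw [if_neg (fun hle => hc f hf m' hm' hle)]
      · simp
      · intro x y _ _ hx hy r
        rw [mul_add, MvPolynomial.coeff_add, hx, hy, add_zero]
      · intro c x _ hx r
        rw [smul_eq_mul, ← mul_assoc, hx]
    have := key p hp 1
    rwa [one_mul] at this
  exact (MvPolynomial.mem_support_iff.mp hn) hzero

end Aux7
section Aux8

open Finsupp Relation

variable {K : Type*} [Field K] {P : Finset Pt} {i : ℕ}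

/-- The leading monomial of a nonzero element of `I_P` is divisible by the
diagonal of an inner interval. -/
lemma leadMon_reducible (hO : Oi i)
    (hrhs : ∀ a b e : Pt, IsInnerInterval P a b → IsInnerInterval P b e →
      (IsInnerInterval P a (b.1, e.2) ∨ IsInnerInterval P a (e.1, b.2)))
    {f : MvPolynomial Pt K} {m : Pt →₀ ℕ}
    (hf : f ∈ polyIdeal K P) (hm : IsLeadMon (GrevlexLt (vord i)) f m) :
    ∃ (u : Pt →₀ ℕ) (a b : Pt), IsInnerInterval P a b ∧ m = u + dg a b := by
  classical
  by_contra hc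
  push_neg at hc
  have hirr : ∀ m', ¬ Red P m m' := by
    rintro m' ⟨u, a, b, hin, hmu, -⟩
    exact hc u a b hin hmu
  have h0 : phi P m f = 0 := phi_polyIdeal (i := i) hO hrhs hf
  have hsum : phi P m f = MvPolynomial.coeff m f := by
    rw [phi]
    rw [Finset.sum_eq_single_of_mem m hm.1 ?_]
    · rw [if_pos (cls_refl m)]
    · intro n hns hne
      rw [if_neg ?_]
      intro hcls
      obtain ⟨z, hnz, hmz⟩ := hcls
      have hzm : z = m := by
        rcases hmz.cases_head with h | ⟨w, hmw, -⟩
        · exact h.symm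
        · exact absurd hmw (hirr w)
      subst hzm
      rcases redS_decrease (i := i) hO hnz with rfl | hlt
      · exact hne rfl
      · exact grevlex_asymm hO (hm.2 n hns hne) hlt
  rw [hsum] at h0
  exact (MvPolynomial.mem_support_iff.mp hm.1) h0

lemma mdeg_le_eq {m' m : Pt →₀ ℕ} (hle : m' ≤ m) (hdeg : mdeg m = mdeg m') :
    m' = m := by
  obtain ⟨t, rfl⟩ := le_iff_exists_add.mp hle
  have hdt : mdeg t = 0 := by
    rw [mdeg_add] at hdeg; omega
  have ht : t = 0 := by
    ext v
    have := apply_le_mdeg t v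
    simp only [Finsupp.coe_zero, Pi.zero_apply]
    omega
  rw [ht, add_zero]

lemma dg_apply_self_pos (a b : Pt) : 0 < dg a b a := by
  have h1 : sgl a a = 1 := by rw [sgl_apply, if_pos rfl]
  have h2 : dg a b a = sgl a a + sgl b a := by rw [dg, Finsupp.add_apply]
  omega

lemma dg_apply_self_pos' (a b : Pt) : 0 < dg a b b := by
  have h1 : sgl b b = 1 := by rw [sgl_apply, if_pos rfl]
  have h2 : dg a b b = sgl a b + sgl b b := by rw [dg, Finsupp.add_apply]
  omega

lemma dg_eq_cases {a' b' x y : Pt} (hab : a' ≠ b') (h : dg a' b' = dg x y) :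
    (a' = x ∧ b' = y) ∨ (a' = y ∧ b' = x) := by
  have ha' : a' = x ∨ a' = y := dg_apply_pos (h ▸ dg_apply_self_pos a' b')
  have hb' : b' = x ∨ b' = y := dg_apply_pos (h ▸ dg_apply_self_pos' a' b')
  rcases ha' with rfl | rfl
  · rcases hb' with rfl | rfl
    · exact absurd rfl hab
    · exact Or.inl ⟨rfl, rfl⟩
  · rcases hb' with rfl | rfl
    · exact Or.inr ⟨rfl, rfl⟩
    · exact absurd rfl hab

/-- The hard direction: under the interval condition, `M` is a reduced
Gröbner basis for every odd order. -/
lemma reducedGB (hO : Oi i)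
    (hrhs : ∀ a b e : Pt, IsInnerInterval P a b → IsInnerInterval P b e →
      (IsInnerInterval P a (b.1, e.2) ∨ IsInnerInterval P a (e.1, b.2))) :
    IsReducedGroebnerBasis (GrevlexLt (vord i)) (innerMinors K P) (polyIdeal K P) := by
  refine ⟨⟨fun g hg => Ideal.subset_span hg, le_antisymm ?_ ?_⟩, ?_, ?_⟩
  · -- lmIdeal M ≤ lmIdeal I
    refine Ideal.span_le.mpr ?_
    rintro p ⟨f, hfM, m, hlm, rfl⟩
    exact Ideal.subset_span ⟨f, Ideal.subset_span hfM, m, hlm, rfl⟩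
  · -- lmIdeal I ≤ lmIdeal M
    refine Ideal.span_le.mpr ?_
    rintro p ⟨f, hfI, m, hlm, rfl⟩
    obtain ⟨u, a, b, hin, rfl⟩ := leadMon_reducible hO hrhs hfI hlm
    have : (monomial (u + dg a b) (1 : K)) = monomial u 1 * monomial (dg a b) 1 := by
      rw [monomial_mul, one_mul]
    rw [this]
    refine Ideal.mul_mem_left _ _ (Ideal.subset_span ?_)
    exact ⟨innerMinor K a b, ⟨a, b, hin, rfl⟩, dg a b,
      isLeadMon_innerMinor hO hin.1 hin.2.1, rfl⟩
  · -- monic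
    rintro g ⟨a, b, hin, rfl⟩ m hm
    rw [leadMon_innerMinor_unique hO hin.1 hin.2.1 hm]
    exact coeff_dg_innerMinor hin.1 hin.2.1
  · -- no monomial divisible by another leading monomial
    rintro g ⟨a, b, hin, rfl⟩ g' ⟨a', b', hin', rfl⟩ hne m hm m' hm' hle
    have hm'dg : m' = dg a' b' := leadMon_innerMinor_unique hO hin'.1 hin'.2.1 hm'
    subst hm'dg
    rw [support_innerMinor hin.1 hin.2.1] at hm
    simp only [Finset.mem_insert, Finset.mem_singleton] at hm
    have ha'b' : a' ≠ b' := (corners_ne hin'.1 hin'.2.1).1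
    have hmeq : dg a' b' = m := by
      apply mdeg_le_eq hle
      rcases hm with rfl | rfl
      · rw [mdeg_dg, mdeg_dg]
      · rw [mdeg_adg, mdeg_dg]
    rcases hm with rfl | rfl
    · -- m is the diagonal of [a,b]
      rcases dg_eq_cases ha'b' hmeq with ⟨rfl, rfl⟩ | ⟨h1, h2⟩
      · exact hne rfl
      · have c1 : a'.1 < b'.1 := hin'.1
        have c2 : b.1 < a.1 := by rw [← h1, ← h2]; exact c1
        have c3 : a.1 < b.1 := hin.1
        omega
    · -- m is the antidiagonal of [a,b] : impossible by corner shapes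
      have hadg : adg a b = dg (a.1, b.2) (b.1, a.2) := rfl
      rw [hadg] at hmeq
      have hcd : ((a.1, b.2) : Pt) ≠ (b.1, a.2) := (corners_ne hin.1 hin.2.1).2.2.2.2.2
      have c3 : a.1 < b.1 := hin.1
      have c4 : a.2 < b.2 := hin.2.1
      rcases dg_eq_cases ha'b' hmeq with ⟨h1, h2⟩ | ⟨h1, h2⟩
      · have c1 : a'.2 < b'.2 := hin'.2.1
        rw [h1, h2] at c1
        simp only at c1
        omega
      · have c1 : a'.1 < b'.1 := hin'.1
        rw [h1, h2] at c1
        simp only at c1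
        omega

end Aux8
section Aux9

open Finsupp Relation

variable {K : Type*} [Field K] {P : Finset Pt}

lemma pt_ne {x1 x2 y1 y2 : ℕ} (h : x1 ≠ y1 ∨ x2 ≠ y2) : ((x1, x2) : Pt) ≠ (y1, y2) := by
  intro he
  rw [Prod.mk.injEq] at he
  rcases h with h | h
  exacts [h he.1, h he.2]

lemma support_monomial_sub {m n : Pt →₀ ℕ} (hne : m ≠ n) :
    ((monomial m (1 : K)) - monomial n 1).support = {m, n} := by
  classical
  ext k
  simp only [MvPolynomial.mem_support_iff, MvPolynomial.coeff_sub, coeff_monomial,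
    Finset.mem_insert, Finset.mem_singleton]
  rcases eq_or_ne k m with rfl | hd
  · simp [Ne.symm hne]
  · rcases eq_or_ne k n with rfl | ha
    · simp [hne, Ne.symm hne]
    · simp [Ne.symm hd, Ne.symm ha, hd, ha]

lemma trip_apply_pos {x y z w : Pt} (h : 0 < (sgl x + sgl y + sgl z) w) :
    w = x ∨ w = y ∨ w = z := by
  by_contra hc
  push_neg at hc
  obtain ⟨h1, h2, h3⟩ := hc
  rw [Finsupp.add_apply, Finsupp.add_apply, sgl_apply, sgl_apply, sgl_apply,
    if_neg (Ne.symm h1), if_neg (Ne.symm h2), if_neg (Ne.symm h3)] at h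
  exact absurd h (lt_irrefl 0)

lemma trip_apply_eq_zero {x y z w : Pt} (h1 : w ≠ x) (h2 : w ≠ y) (h3 : w ≠ z) :
    (sgl x + sgl y + sgl z) w = 0 := by
  rw [Finsupp.add_apply, Finsupp.add_apply, sgl_apply, sgl_apply, sgl_apply,
    if_neg (Ne.symm h1), if_neg (Ne.symm h2), if_neg (Ne.symm h3)]

lemma mdeg_trip (x y z : Pt) : mdeg (sgl x + sgl y + sgl z) = 3 := by
  rw [mdeg_add, mdeg_add, mdeg_sgl, mdeg_sgl, mdeg_sgl]

/-- Forward direction: if `M` is a Gröbner basis w.r.t. `<¹`, the interval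
condition holds. -/
lemma forward_direction {a b e : Pt}
    (hab : IsInnerInterval P a b) (hbe : IsInnerInterval P b e)
    (hGB : IsReducedGroebnerBasis (GrevlexLt (vord 1)) (innerMinors K P)
      (polyIdeal K P))
    (hnf : ¬ IsInnerInterval P a (b.1, e.2)) (hng : ¬ IsInnerInterval P a (e.1, b.2)) :
    False := by
  classical
  have hO1 : Oi 1 := Or.inl rfl
  obtain ⟨a1, a2⟩ := a; obtain ⟨b1, b2⟩ := b; obtain ⟨e1, e2⟩ := e
  have hab1 : a1 < b1 := hab.1
  have hab2 : a2 < b2 := hab.2.1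
  have hbe1 : b1 < e1 := hbe.1
  have hbe2 : b2 < e2 := hbe.2.1
  set M1 : Pt →₀ ℕ := sgl (a1, a2) + sgl (b1, e2) + sgl (e1, b2) with hM1
  set M2 : Pt →₀ ℕ := sgl (a1, b2) + sgl (b1, a2) + sgl (e1, e2) with hM2
  -- distinctness of corner points
  have hM1M2 : M1 ≠ M2 := by
    intro hEq
    have h1 := DFunLike.congr_fun hEq (a1, a2)
    have hz : M2 (a1, a2) = 0 := by
      rw [hM2]
      exact trip_apply_eq_zero (pt_ne (by omega)) (pt_ne (by omega)) (pt_ne (by omega))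
    have ho : M1 (a1, a2) = sgl (a1, a2) (a1, a2) + sgl (b1, e2) (a1, a2)
        + sgl (e1, b2) (a1, a2) := by
      rw [hM1, Finsupp.add_apply, Finsupp.add_apply]
    have h3 : sgl (a1, a2) (a1, a2) = 1 := by rw [sgl_apply, if_pos rfl]
    omega
  -- the witness binomial
  set h : MvPolynomial Pt K := monomial M1 1 - monomial M2 1 with hh
  have hrep : h = (monomial (sgl (e1, e2)) 1) * innerMinor K (a1, a2) (b1, b2)
      - (monomial (sgl (a1, a2)) 1) * innerMinor K (b1, b2) (e1, e2) := by
    simp only [innerMinor_eq, mul_sub, monomial_mul, one_mul]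
    rw [show sgl (e1, e2) + dg (a1, a2) (b1, b2) = sgl (a1, a2) + dg (b1, b2) (e1, e2) by
      simp only [dg]; abel]
    rw [show sgl (e1, e2) + adg (a1, a2) (b1, b2) = M2 by
      rw [hM2]; simp only [adg_mk]; abel]
    rw [show sgl (a1, a2) + adg (b1, b2) (e1, e2) = M1 by
      rw [hM1]; simp only [adg_mk]; abel]
    ring
  have hI : h ∈ polyIdeal K P := by
    rw [hrep]
    refine Ideal.sub_mem _ ?_ ?_ <;>
      exact Ideal.mul_mem_left _ _ (Ideal.subset_span (by
        first
          | exact ⟨(a1, a2), (b1, b2), hab, rfl⟩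
          | exact ⟨(b1, b2), (e1, e2), hbe, rfl⟩))
  -- M1 is the leading monomial of h w.r.t. <¹
  have hmin : ∀ u : Pt,
      (u = (a1, a2) ∨ u = (b1, e2) ∨ u = (e1, b2) ∨ u = (b1, a2) ∨ u = (e1, e2)) →
      vord 1 ((a1, b2) : Pt) u := by
    rintro u (rfl | rfl | rfl | rfl | rfl) <;>
      (simp only [vord, true_and, and_true]; omega)
  have hM1c : M1 (a1, b2) = 0 := by
    rw [hM1]
    exact trip_apply_eq_zero (pt_ne (by omega)) (pt_ne (by omega)) (pt_ne (by omega))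
  have hM2c : M2 (a1, b2) = 1 := by
    rw [hM2, Finsupp.add_apply, Finsupp.add_apply, sgl_apply, sgl_apply, sgl_apply,
      if_pos rfl, if_neg (pt_ne (by omega)), if_neg (pt_ne (by omega))]
  have hlt : GrevlexLt (vord 1) M2 M1 := by
    refine Or.inr ⟨by rw [hM1, hM2, mdeg_trip, mdeg_trip], (a1, b2), ?_, ?_⟩
    · rw [hM1c, hM2c]; omega
    · intro w hw
      have hwne : ∀ u : Pt,
          (u = (a1, a2) ∨ u = (b1, e2) ∨ u = (e1, b2) ∨ u = (b1, a2) ∨ u = (e1, e2)) →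
          w ≠ u := by
        intro u hu hwu
        subst hwu
        exact vord_asymm hO1 (hmin w hu) hw
      have hwc : w ≠ ((a1, b2) : Pt) := by
        intro hwc
        subst hwc
        exact vord_asymm hO1 hw hw
      rw [hM1, hM2, trip_apply_eq_zero (hwne _ (Or.inl rfl))
          (hwne _ (Or.inr (Or.inl rfl))) (hwne _ (Or.inr (Or.inr (Or.inl rfl)))),
        trip_apply_eq_zero hwc (hwne _ (Or.inr (Or.inr (Or.inr (Or.inl rfl)))))
          (hwne _ (Or.inr (Or.inr (Or.inr (Or.inr rfl)))))]
  have hlead : IsLeadMon (GrevlexLt (vord 1)) h M1 := by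
    constructor
    · rw [hh, support_monomial_sub hM1M2]; simp
    · intro m' hm' hne'
      rw [hh, support_monomial_sub hM1M2] at hm'
      simp only [Finset.mem_insert, Finset.mem_singleton] at hm'
      rcases hm' with rfl | rfl
      · exact absurd rfl hne'
      · exact hlt
  -- M1 belongs to the leading-monomial ideal of I, hence of M
  have hM1mem : (monomial M1 (1 : K)) ∈
      lmIdeal (GrevlexLt (vord 1)) ((polyIdeal K P : Set (MvPolynomial Pt K))) :=
    Ideal.subset_span ⟨h, hI, M1, hlead, rfl⟩
  rw [← hGB.1.2] at hM1mem
  obtain ⟨f, ⟨a', b', hin', rfl⟩, m', hlm', hle⟩ :=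
    lmIdeal_mem_divides hM1mem (n := M1)
      (by rw [MvPolynomial.support_monomial, if_neg (one_ne_zero)]; simp)
  have hm'dg : m' = dg a' b' :=
    leadMon_innerMinor_unique hO1 hin'.1 hin'.2.1 hlm'
  subst hm'dg
  -- the divisor's corners lie in the support of M1
  have hlea : ∀ v, dg a' b' v ≤ M1 v := fun v => Finsupp.le_def.mp hle v
  have ha' : a' = (a1, a2) ∨ a' = (b1, e2) ∨ a' = (e1, b2) := by
    apply trip_apply_pos (x := (a1, a2)) (y := (b1, e2)) (z := (e1, b2))
    have := hlea a'
    have h2 := dg_apply_self_pos a' b'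
    rw [hM1] at this
    omega
  have hb' : b' = (a1, a2) ∨ b' = (b1, e2) ∨ b' = (e1, b2) := by
    apply trip_apply_pos (x := (a1, a2)) (y := (b1, e2)) (z := (e1, b2))
    have := hlea b'
    have h2 := dg_apply_self_pos' a' b'
    rw [hM1] at this
    omega
  rcases ha' with rfl | rfl | rfl <;> rcases hb' with rfl | rfl | rfl <;>
    first
      | exact hnf hin'
      | exact hng hin'
      | (exfalso
         have h1 := hin'.1
         have h2 := hin'.2.1
         dsimp only at h1 h2
         omega)

end Aux9
/-- Proposition 2.1 (odd orders): `M` is a reduced Gröbner basis of `I_P` with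
respect to `<ⁱ_grevlex` for all `i ∈ O = {1,3,5,7}` iff for any two inner
intervals `[a,b]` and `[b,e]` of `P`, one of `[a,f]`, `[a,g]` is an inner
interval of `P`, where `f, g` are the anti-diagonal corners of `[b,e]`. -/
theorem reducedGB_odd_iff (K : Type*) [Field K] (P : Finset Pt)
    (hP : IsPolyomino P) :
    (∀ i ∈ ({1, 3, 5, 7} : Finset ℕ),
        IsReducedGroebnerBasis (GrevlexLt (vord i)) (innerMinors K P)
          (polyIdeal K P)) ↔
      (∀ a b e : Pt, IsInnerInterval P a b → IsInnerInterval P b e →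
        (IsInnerInterval P a (b.1, e.2) ∨ IsInnerInterval P a (e.1, b.2))) := by
  constructor
  · intro hall a b e hab hbe
    by_contra hc
    push_neg at hc
    exact forward_direction hab hbe (hall 1 (by simp)) hc.1 hc.2
  · intro hrhs i hi
    have hO : Oi i := by
      simp only [Finset.mem_insert, Finset.mem_singleton] at hi
      exact hi
    exact reducedGB hO hrhs

end PolyominoPaper
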